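/- arXiv:2404.12131 — 4 statements merged into one kernel-verified Lean document; each statement's English description precedes it below -/
import Mathlib

section
/- If a sequence (a_n) of real numbers is a Stieltjes moment sequence, i.e. there exists a positive measure μ on [0,∞) with a_n = ∫ x^n dμ(x) for all n ≥ 0, then there exist real numbers c ≥ 0 and α_1, α_2, ... ≥ 0 such that the formal power series ∑ a_n t^n equals the Stieltjes continued fraction c/(1 - α_1 t/(1 - α_2 t/(1 - ...))) in the sense of formal power series (i.e., for each N, the first N coefficients of the continued fraction truncated to depth N agree with a_0, ..., a_{N-1}). -/
open MeasureTheory PowerSeries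

/-- Depth-`d` truncation of the Stieltjes continued fraction
`1/(1 - α_i t/(1 - α_{i+1} t/(1 - ...)))`, starting at index `i`. -/
noncomputable def sfrac (α : ℕ → ℝ) : ℕ → ℕ → PowerSeries ℝ
  | 0, _ => 1
  | d + 1, i => (1 - PowerSeries.C (α i) * PowerSeries.X * sfrac α d (i + 1))⁻¹

variable (α : ℕ → ℝ)

lemma constCoeff_sfrac : ∀ d i, constantCoeff (sfrac α d i) = 1 := by
  intro d i
  induction d generalizing i with
  | zero => simp [sfrac]
  | succ d ih =>
    simp [sfrac, PowerSeries.constantCoeff_inv, ih]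

lemma sfrac_eq (d i : ℕ) :
    sfrac α (d+1) i = 1 + (PowerSeries.C (α i) * X * sfrac α d (i+1)) * sfrac α (d+1) i := by
  set q := PowerSeries.C (α i) * X * sfrac α d (i+1) with hq
  have hc : constantCoeff (1 - q) = 1 := by
    simp [hq]
  have h1 : (1 - q) * sfrac α (d+1) i = 1 := by
    rw [show sfrac α (d+1) i = (1 - q)⁻¹ from rfl]
    exact PowerSeries.mul_inv_cancel _ (by rw [hc]; norm_num)
  have := sub_mul 1 q (sfrac α (d+1) i)
  rw [h1] at this
  linear_combination -this

lemma coeff_sfrac_succ (n d i : ℕ) :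
    coeff (n+1) (sfrac α (d+1) i) =
      α i * ∑ k ∈ Finset.range (n+1),
        coeff k (sfrac α d (i+1)) * coeff (n-k) (sfrac α (d+1) i) := by
  conv_lhs => rw [sfrac_eq]
  rw [map_add]
  have h1 : (coeff (n+1)) (1 : PowerSeries ℝ) = 0 := by simp
  rw [h1, zero_add]
  have : (PowerSeries.C (α i) * X * sfrac α d (i+1)) * sfrac α (d+1) i
      = PowerSeries.C (α i) * (X * (sfrac α d (i+1) * sfrac α (d+1) i)) := by ring
  rw [this, PowerSeries.coeff_C_mul, PowerSeries.coeff_succ_X_mul, PowerSeries.coeff_mul,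
    Finset.Nat.sum_antidiagonal_eq_sum_range_succ_mk]

lemma coeff_sfrac_stable : ∀ n i d e, n < d → n < e →
    coeff n (sfrac α d i) = coeff n (sfrac α e i) := by
  intro n
  induction n using Nat.strong_induction_on with
  | _ n ih =>
    intro i d e hd he
    match n, d, e with
    | 0, d, e => simp [PowerSeries.coeff_zero_eq_constantCoeff, constCoeff_sfrac]
    | n+1, d+1, e+1 =>
      rw [coeff_sfrac_succ, coeff_sfrac_succ]
      congr 1
      apply Finset.sum_congr rfl
      intro k hk
      rw [Finset.mem_range] at hk
      have hk' : k ≤ n := Nat.lt_succ_iff.mp hk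
      congr 1
      · exact ih k (by omega) (i+1) d e (by omega) (by omega)
      · exact ih (n - k) (by omega) i (d+1) (e+1) (by omega) (by omega)

noncomputable def sig (α : ℕ → ℝ) (i n : ℕ) : ℝ := coeff n (sfrac α (n+1) i)

lemma coeff_sfrac {n N : ℕ} (h : n < N) (i : ℕ) : coeff n (sfrac α N i) = sig α i n :=
  coeff_sfrac_stable α n i N (n+1) h (Nat.lt_succ_self n)

lemma sig_zero (i : ℕ) : sig α i 0 = 1 := by
  simp [sig, PowerSeries.coeff_zero_eq_constantCoeff, constCoeff_sfrac]

lemma sig_succ (i n : ℕ) :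
    sig α i (n+1) = α i * ∑ k ∈ Finset.range (n+1), sig α (i+1) k * sig α i (n-k) := by
  rw [sig, coeff_sfrac_succ]
  congr 1
  apply Finset.sum_congr rfl
  intro k hk
  rw [Finset.mem_range] at hk
  rw [coeff_sfrac_stable α k (i+1) (n+1) (k+1) (by omega) (by omega),
    coeff_sfrac_stable α (n-k) i (n+1+1) ((n-k)+1) (by omega) (by omega)]
  rfl

lemma sig_congr (β : ℕ → ℝ) : ∀ n i, (∀ j, i ≤ j → j < i + n → α j = β j) →
    sig α i n = sig β i n := by
  intro n
  induction n using Nat.strong_induction_on with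
  | _ n ih =>
    intro i hw
    match n with
    | 0 => rw [sig_zero, sig_zero]
    | n+1 =>
      rw [sig_succ, sig_succ]
      have hi : α i = β i := hw i le_rfl (by omega)
      rw [hi]
      congr 1
      apply Finset.sum_congr rfl
      intro k hk
      rw [Finset.mem_range] at hk
      congr 1
      · exact ih k (by omega) (i+1) (fun j h1 h2 => hw j (by omega) (by omega))
      · exact ih (n-k) (by omega) i (fun j h1 h2 => hw j (by omega) (by omega))

lemma sig_affine (β : ℕ → ℝ) : ∀ n i, (∀ j, i ≤ j → j < i + n → α j = β j) →
    sig α i (n+1) = sig β i (n+1) + (α (i+n) - β (i+n)) * ∏ j ∈ Finset.range n, α (i+j) := by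
  intro n
  induction n using Nat.strong_induction_on with
  | _ n ih =>
    intro i hw
    match n with
    | 0 =>
      have h1 : ∀ (γ : ℕ → ℝ), sig γ i 1 = γ i := by
        intro γ
        rw [sig_succ]
        simp [sig_zero]
      rw [h1, h1]
      simp
    | n+1 =>
      rw [sig_succ, sig_succ]
      have hi : α i = β i := hw i le_rfl (by omega)
      have heq : ∀ k ∈ Finset.range (n+1),
          sig α (i+1) k * sig α i (n+1-k) = sig β (i+1) k * sig β i (n+1-k) := by
        intro k hk
        rw [Finset.mem_range] at hk
        congr 1
        · exact sig_congr α β k (i+1) (fun j h1 h2 => hw j (by omega) (by omega))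
        · exact sig_congr α β (n+1-k) i (fun j h1 h2 => hw j (by omega) (by omega))
      have hS : ∑ k ∈ Finset.range (n+1), sig α (i+1) k * sig α i (n+1-k)
          = ∑ k ∈ Finset.range (n+1), sig β (i+1) k * sig β i (n+1-k) :=
        Finset.sum_congr rfl heq
      have hL := Finset.sum_range_succ (fun k => sig α (i+1) k * sig α i (n+1-k)) (n+1)
      have hR := Finset.sum_range_succ (fun k => sig β (i+1) k * sig β i (n+1-k)) (n+1)
      rw [hL, hR, hS]
      have htop : sig α (i+1) (n+1) = sig β (i+1) (n+1)
          + (α (i+1+n) - β (i+1+n)) * ∏ j ∈ Finset.range n, α (i+1+j) :=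
        ih n (by omega) (i+1) (fun j h1 h2 => hw j (by omega) (by omega))
      have hsub : n + 1 - (n+1) = 0 := by omega
      rw [hsub, sig_zero, sig_zero, htop]
      have hprod : ∏ j ∈ Finset.range (n+1), α (i+j)
          = α i * ∏ j ∈ Finset.range n, α (i+1+j) := by
        rw [Finset.prod_range_succ', mul_comm, add_zero]
        congr 1
        apply Finset.prod_congr rfl
        intro j _
        congr 1
        omega
      have hidx : i + 1 + n = i + (n+1) := by omega
      rw [hidx] at htop ⊢
      rw [hprod, ← hi]
      ring


noncomputable def fser (α : ℕ → ℝ) (i : ℕ) : PowerSeries ℝ := PowerSeries.mk (sig α i)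

lemma constCoeff_fser (i : ℕ) : constantCoeff (fser α i) = 1 := by
  rw [← PowerSeries.coeff_zero_eq_constantCoeff]
  simp [fser, sig_zero]

lemma fser_eq (j : ℕ) :
    fser α j = 1 + PowerSeries.C (α j) * X * (fser α (j+1) * fser α j) := by
  ext n
  match n with
  | 0 => simp [fser, sig_zero]
  | n+1 =>
    rw [map_add]
    have h1 : (coeff (n+1)) (1 : PowerSeries ℝ) = 0 := by simp
    rw [h1, zero_add]
    have : PowerSeries.C (α j) * X * (fser α (j+1) * fser α j)
        = PowerSeries.C (α j) * (X * (fser α (j+1) * fser α j)) := by ring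
    rw [this, PowerSeries.coeff_C_mul, PowerSeries.coeff_succ_X_mul, PowerSeries.coeff_mul,
      Finset.Nat.sum_antidiagonal_eq_sum_range_succ_mk]
    simp only [fser, PowerSeries.coeff_mk]
    exact sig_succ α j n

noncomputable def Eprod (α : ℕ → ℝ) (i h : ℕ) : PowerSeries ℝ :=
  ∏ j ∈ Finset.range (h+1), fser α (i+j)

lemma Eprod_succ (i h : ℕ) : Eprod α i (h+1) = Eprod α i h * fser α (i+h+1) := by
  rw [Eprod, Finset.prod_range_succ, Eprod, ← Nat.add_assoc]

lemma constCoeff_Eprod (i h : ℕ) : constantCoeff (Eprod α i h) = 1 := by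
  rw [Eprod, map_prod]
  apply Finset.prod_eq_one
  intro j _
  exact constCoeff_fser α (i+j)

lemma Eprod_rec (i h : ℕ) :
    Eprod α i (h+1) = Eprod α i h + PowerSeries.C (α (i+h+1)) * X * Eprod α i (h+2) := by
  rw [Eprod_succ, Eprod_succ, Eprod_succ]
  conv_lhs => rw [fser_eq α (i+h+1)]
  have : i + h + 1 + 1 = i + h + 2 := by omega
  rw [this]
  ring_nf

noncomputable def bb (α : ℕ → ℝ) (i m h : ℕ) : ℝ :=
  if h ≤ m ∧ Even (m - h) then coeff ((m-h)/2) (Eprod α i h) else 0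

lemma bb_zero_of_lt {m h : ℕ} (hlt : m < h) (i : ℕ) : bb α i m h = 0 := by
  rw [bb, if_neg]
  rintro ⟨h1, -⟩
  omega

lemma bb_diag (i m : ℕ) : bb α i m m = 1 := by
  rw [bb, if_pos ⟨le_rfl, by simp⟩]
  simp [PowerSeries.coeff_zero_eq_constantCoeff, constCoeff_Eprod]

lemma bb_zero_zero (i : ℕ) : bb α i 0 0 = 1 := bb_diag α i 0

lemma bb_even (i m h : ℕ) (hpar : ¬ Even (m - h)) : bb α i m h = 0 := by
  rw [bb, if_neg]
  rintro ⟨-, h2⟩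
  exact hpar h2

lemma bb_sig (i n : ℕ) : bb α i (2*n) 0 = sig α i n := by
  rw [bb, if_pos ⟨Nat.zero_le _, by simp⟩]
  have h1 : (2*n - 0)/2 = n := by omega
  rw [h1]
  show coeff n (∏ j ∈ Finset.range 1, fser α (i+j)) = sig α i n
  simp [fser]

lemma coeff_CXmul (c : ℝ) (φ : PowerSeries ℝ) (r : ℕ) :
    coeff r (PowerSeries.C c * X * φ) = if r = 0 then 0 else c * coeff (r-1) φ := by
  match r with
  | 0 =>
    simp [PowerSeries.coeff_zero_eq_constantCoeff]
  | r+1 =>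
    rw [if_neg (by omega)]
    have : PowerSeries.C c * X * φ = PowerSeries.C c * (X * φ) := by ring
    rw [this, PowerSeries.coeff_C_mul, PowerSeries.coeff_succ_X_mul,
      show r + 1 - 1 = r by omega]

lemma bb_rec (i m h : ℕ) :
    bb α i (m+1) h = (if h = 0 then 0 else bb α i m (h-1)) + α (i+h) * bb α i m (h+1) := by
  match h with
  | 0 =>
    rw [if_pos rfl, zero_add, add_zero]
    by_cases hpar : Even (m+1)
    · obtain ⟨r, hr⟩ : ∃ r, m = 2*r+1 := by
        rcases hpar with ⟨t, ht⟩
        exact ⟨t-1, by omega⟩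
      have h1 : bb α i (m+1) 0 = coeff (r+1) (fser α i) := by
        rw [bb, if_pos ⟨Nat.zero_le _, by rw [Nat.sub_zero]; exact hpar⟩]
        rw [show (m+1-0)/2 = r+1 by omega]
        rw [Eprod, Finset.prod_range_one, add_zero]
      have h2 : bb α i m 1 = coeff r (Eprod α i 1) := by
        rw [bb, if_pos ⟨by omega, by rw [show m - 1 = 2*r by omega]; exact ⟨r, by omega⟩⟩]
        rw [show (m-1)/2 = r by omega]
      rw [h1, h2]
      conv_lhs => rw [fser_eq α i]
      rw [map_add]
      rw [show (coeff (r+1)) (1 : PowerSeries ℝ) = 0 by simp, zero_add]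
      rw [coeff_CXmul, if_neg (by omega)]
      rw [show r + 1 - 1 = r by omega]
      congr 1
      rw [Eprod]
      rw [show Finset.range (1+1) = Finset.range 2 from rfl]
      rw [Finset.prod_range_succ, Finset.prod_range_one, add_zero, mul_comm]
    · have hL : bb α i (m+1) 0 = 0 := bb_even α i (m+1) 0 (by rwa [Nat.sub_zero])
      have hR : bb α i m 1 = 0 := by
        match m with
        | 0 => exact bb_zero_of_lt α (by omega) i
        | m'+1 =>
          apply bb_even α i (m'+1) 1
          intro hc
          apply hpar
          rcases hc with ⟨t, ht⟩
          exact ⟨t+1, by omega⟩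
      rw [hL, hR, mul_zero]
  | h+1 =>
    rw [if_neg (by omega)]
    rw [show h + 1 - 1 = h by omega]
    by_cases hb : h + 1 ≤ m + 1
    swap
    · rw [bb_zero_of_lt α (by omega) i, bb_zero_of_lt α (by omega) i,
        bb_zero_of_lt α (by omega) i]
      ring
    by_cases hpar : Even (m - h)
    swap
    · have hL : bb α i (m+1) (h+1) = 0 := by
        apply bb_even
        intro hc
        apply hpar
        rwa [show m + 1 - (h+1) = m - h by omega] at hc
      have h1 : bb α i m h = 0 := bb_even α i _ _ hpar
      have h2 : bb α i m (h+2) = 0 := by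
        by_cases hb2 : h + 2 ≤ m
        · apply bb_even
          intro hc
          apply hpar
          rcases hc with ⟨t, ht⟩
          exact ⟨t+1, by omega⟩
        · exact bb_zero_of_lt α (by omega) i
      rw [hL, h1, h2]
      ring
    · obtain ⟨r, hr⟩ : ∃ r, m - h = 2*r := by
        rcases hpar with ⟨t, ht⟩; exact ⟨t, by omega⟩
      have hL : bb α i (m+1) (h+1) = coeff r (Eprod α i (h+1)) := by
        rw [bb, if_pos ⟨by omega, by rw [show m+1-(h+1) = 2*r by omega]; exact ⟨r, by omega⟩⟩]
        rw [show (m+1-(h+1))/2 = r by omega]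
      have h1 : bb α i m h = coeff r (Eprod α i h) := by
        rw [bb, if_pos ⟨by omega, hpar⟩]
        rw [show (m-h)/2 = r by omega]
      rw [hL, h1, Eprod_rec, map_add, coeff_CXmul]
      congr 1
      match r, hr with
      | 0, hr =>
        rw [if_pos rfl]
        rw [bb_zero_of_lt α (by omega) i, mul_zero]
      | r+1, hr =>
        rw [if_neg (by omega)]
        have h2 : bb α i m (h+2) = coeff r (Eprod α i (h+2)) := by
          rw [bb, if_pos ⟨by omega, by rw [show m-(h+2) = 2*r by omega]; exact ⟨r, by omega⟩⟩]
          rw [show (m-(h+2))/2 = r by omega]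
        rw [h2]
        rw [show r + 1 - 1 = r by omega]
        rfl

noncomputable def pp (α : ℕ → ℝ) (i h : ℕ) : ℝ := ∏ j ∈ Finset.range h, α (i + j)

lemma pp_zero (i : ℕ) : pp α i 0 = 1 := by simp [pp]

lemma pp_succ (i h : ℕ) : pp α i (h+1) = pp α i h * α (i+h) := by
  rw [pp, Finset.prod_range_succ, pp]

lemma bb_step (i m M : ℕ) (hm : m < M) :
    ∑ h ∈ Finset.range (M+1), bb α i (m+1) h * bb α i (M-m-1) h * pp α i h
      = ∑ h ∈ Finset.range (M+1), bb α i m h * bb α i (M-m) h * pp α i h := by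
  have hMm : M - m = (M - m - 1) + 1 := by omega
  set m' := M - m - 1 with hm'
  have hexp : ∀ h, bb α i (m+1) h * bb α i m' h * pp α i h
      = (if h = 0 then 0 else bb α i m (h-1) * bb α i m' h * pp α i h)
        + bb α i m (h+1) * bb α i m' h * (α (i+h) * pp α i h) := by
    intro h
    rw [bb_rec]
    by_cases h0 : h = 0
    · subst h0; rw [if_pos rfl, if_pos rfl]; ring
    · rw [if_neg h0, if_neg h0]; ring
  have hexp2 : ∀ h, bb α i m h * bb α i (M-m) h * pp α i h
      = (if h = 0 then 0 else bb α i m h * bb α i m' (h-1) * pp α i h)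
        + bb α i m h * bb α i m' (h+1) * (α (i+h) * pp α i h) := by
    intro h
    rw [hMm, bb_rec]
    by_cases h0 : h = 0
    · subst h0; rw [if_pos rfl, if_pos rfl]; ring
    · rw [if_neg h0, if_neg h0]; ring
  rw [Finset.sum_congr rfl (fun h _ => hexp h), Finset.sum_congr rfl (fun h _ => hexp2 h),
    Finset.sum_add_distrib, Finset.sum_add_distrib]
  have hA : ∑ h ∈ Finset.range (M+1),
        (if h = 0 then 0 else bb α i m (h-1) * bb α i m' h * pp α i h)
      = ∑ k ∈ Finset.range M, bb α i m k * bb α i m' (k+1) * pp α i (k+1) := by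
    rw [Finset.sum_range_succ']
    rw [if_pos rfl, add_zero]
    apply Finset.sum_congr rfl
    intro k _
    rw [if_neg (by omega), show k + 1 - 1 = k by omega]
  have hA2 : ∑ h ∈ Finset.range (M+1),
        (if h = 0 then 0 else bb α i m h * bb α i m' (h-1) * pp α i h)
      = ∑ k ∈ Finset.range M, bb α i m (k+1) * bb α i m' k * pp α i (k+1) := by
    rw [Finset.sum_range_succ']
    rw [if_pos rfl, add_zero]
    apply Finset.sum_congr rfl
    intro k _
    rw [if_neg (by omega), show k + 1 - 1 = k by omega]
  have hB : ∑ h ∈ Finset.range (M+1),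
        bb α i m (h+1) * bb α i m' h * (α (i+h) * pp α i h)
      = ∑ k ∈ Finset.range M, bb α i m (k+1) * bb α i m' k * (α (i+k) * pp α i k) := by
    rw [Finset.sum_range_succ, bb_zero_of_lt α (show m < M+1 by omega) i, zero_mul, zero_mul,
      add_zero]
  have hB2 : ∑ h ∈ Finset.range (M+1),
        bb α i m h * bb α i m' (h+1) * (α (i+h) * pp α i h)
      = ∑ k ∈ Finset.range M, bb α i m k * bb α i m' (k+1) * (α (i+k) * pp α i k) := by
    rw [Finset.sum_range_succ, bb_zero_of_lt α (show m' < M+1 by omega) i, mul_zero, zero_mul,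
      add_zero]
  rw [hA, hA2, hB, hB2]
  have e1 : ∑ k ∈ Finset.range M, bb α i m k * bb α i m' (k+1) * pp α i (k+1)
      = ∑ k ∈ Finset.range M, bb α i m k * bb α i m' (k+1) * (α (i+k) * pp α i k) := by
    apply Finset.sum_congr rfl
    intro k _
    rw [pp_succ]
    ring
  have e2 : ∑ k ∈ Finset.range M, bb α i m (k+1) * bb α i m' k * (α (i+k) * pp α i k)
      = ∑ k ∈ Finset.range M, bb α i m (k+1) * bb α i m' k * pp α i (k+1) := by
    apply Finset.sum_congr rfl
    intro k _
    rw [pp_succ]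
    ring
  rw [e1, e2]
  exact add_comm _ _

lemma bb_split (i : ℕ) : ∀ m M, m ≤ M →
    bb α i M 0 = ∑ h ∈ Finset.range (M+1), bb α i m h * bb α i (M-m) h * pp α i h := by
  intro m
  induction m with
  | zero =>
    intro M hM
    rw [Finset.sum_eq_single_of_mem 0 (by simp)]
    · rw [bb_zero_zero, pp_zero, Nat.sub_zero, one_mul, mul_one]
    · intro h _ hh
      match h, hh with
      | h+1, _ => rw [bb_zero_of_lt α (by omega) i, zero_mul, zero_mul]
  | succ m ih =>
    intro M hM
    rw [show M - (m+1) = M - m - 1 by omega]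
    rw [bb_step α i m M (by omega)]
    exact ih M (by omega)

noncomputable def vaux (α : ℕ → ℝ) (s ε : ℕ) : ℕ → (ℕ → ℝ)
  | 0 => fun p => if p = 0 then 1 else 0
  | j+1 => fun p =>
      if p = j+1 then
        -∑ k ∈ Finset.range (j+1), vaux α s ε j k * bb α 1 (2*(s-k)+ε) (2*(s-j-1)+ε)
      else vaux α s ε j p

noncomputable def vvec (α : ℕ → ℝ) (s ε : ℕ) (j : ℕ) : ℝ := vaux α s ε j j

lemma vaux_stable (s ε : ℕ) : ∀ j p, p ≤ j → vaux α s ε j p = vvec α s ε p := by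
  intro j
  induction j with
  | zero =>
    intro p hp
    match p, hp with
    | 0, _ => rfl
  | succ j ih =>
    intro p hp
    by_cases hpj : p = j+1
    · subst hpj; rfl
    · have hp' : p ≤ j := by omega
      have hun : vaux α s ε (j+1) p = vaux α s ε j p := by
        simp only [vaux]
        rw [if_neg hpj]
      rw [hun]
      exact ih p hp'

lemma vvec_zero (s ε : ℕ) : vvec α s ε 0 = 1 := rfl

lemma vvec_succ (s ε j : ℕ) :
    vvec α s ε (j+1)
      = -∑ k ∈ Finset.range (j+1), vvec α s ε k * bb α 1 (2*(s-k)+ε) (2*(s-j-1)+ε) := by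
  show vaux α s ε (j+1) (j+1) = _
  simp only [vaux, if_true, eq_self_iff_true]
  congr 1
  apply Finset.sum_congr rfl
  intro k hk
  rw [Finset.mem_range] at hk
  rw [vaux_stable α s ε j k (by omega)]

noncomputable def uvec (α : ℕ → ℝ) (s ε : ℕ) (p : ℕ) : ℝ :=
  if p ≤ s then vvec α s ε (s-p) else 0

lemma uvec_top (s ε : ℕ) : uvec α s ε s = 1 := by
  rw [uvec, if_pos le_rfl, Nat.sub_self, vvec_zero]

lemma uvec_ortho (s ε : ℕ) : ∀ h' ≤ s,
    ∑ p ∈ Finset.range (s+1), uvec α s ε p * bb α 1 (2*p+ε) (2*h'+ε)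
      = if h' = s then 1 else 0 := by
  intro h' hh'
  have hrefl := (Finset.sum_range_reflect
    (fun p => uvec α s ε p * bb α 1 (2*p+ε) (2*h'+ε)) (s+1)).symm
  rw [hrefl]
  have hterm : ∀ j ∈ Finset.range (s+1),
      uvec α s ε (s+1-1-j) * bb α 1 (2*(s+1-1-j)+ε) (2*h'+ε)
        = vvec α s ε j * bb α 1 (2*(s-j)+ε) (2*h'+ε) := by
    intro j hj
    rw [Finset.mem_range] at hj
    rw [show s+1-1-j = s-j by omega, uvec, if_pos (by omega), show s-(s-j) = j by omega]
  rw [Finset.sum_congr rfl hterm]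
  set F : ℕ → ℝ := fun j => vvec α s ε j * bb α 1 (2*(s-j)+ε) (2*h'+ε) with hF
  set d := s - h' with hd
  have hzero : ∀ j ∈ Finset.range (s+1), j ∉ Finset.range (d+1) → F j = 0 := by
    intro j hj hjd
    rw [Finset.mem_range] at hj
    rw [Finset.mem_range] at hjd
    have : s - j < h' := by omega
    rw [hF]
    simp only []
    rw [bb_zero_of_lt α (by omega) 1, mul_zero]
  have hsub : Finset.range (d+1) ⊆ Finset.range (s+1) := by
    apply Finset.range_subset_range.mpr
    omega
  rw [← Finset.sum_subset hsub hzero]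
  rw [Finset.sum_range_succ]
  have hFd : F d = vvec α s ε d := by
    rw [hF]
    simp only []
    rw [show s - d = h' by omega, bb_diag, mul_one]
  rw [hFd]
  by_cases hcase : h' = s
  · subst hcase
    rw [if_pos rfl]
    have hd0 : d = 0 := by omega
    rw [hd0]
    simp [vvec_zero]
  · rw [if_neg hcase]
    have hd1 : d = (d-1)+1 := by omega
    rw [show vvec α s ε d = vvec α s ε ((d-1)+1) by rw [← hd1]]
    rw [vvec_succ]
    rw [show s-(d-1)-1 = h' by omega, show Finset.range ((d-1)+1) = Finset.range d by rw [← hd1]]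
    have : ∑ j ∈ Finset.range d, F j
        = ∑ k ∈ Finset.range d, vvec α s ε k * bb α 1 (2*(s-k)+ε) (2*h'+ε) := rfl
    rw [this]
    ring

lemma bb_zero_parity (i m h : ℕ) (hp : m % 2 ≠ h % 2) : bb α i m h = 0 := by
  by_cases hle : h ≤ m
  · exact bb_even α i m h (by
      intro hc
      rcases hc with ⟨t, ht⟩
      omega)
  · exact bb_zero_of_lt α (by omega) i

lemma key_sum (s ε : ℕ) (hε : ε ≤ 1) (t : ℕ) :
    ∑ p ∈ Finset.range (s+1), uvec α s ε p * sig α 1 (t+ε+p)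
      = bb α 1 (2*t+ε) (2*s+ε) * pp α 1 (2*s+ε) := by
  set R := 2*(t+ε+s)+1 with hR
  have hsig : ∀ p ∈ Finset.range (s+1),
      uvec α s ε p * sig α 1 (t+ε+p)
        = ∑ h ∈ Finset.range R,
            uvec α s ε p * (bb α 1 (2*t+ε) h * bb α 1 (2*p+ε) h * pp α 1 h) := by
    intro p hp
    rw [Finset.mem_range] at hp
    have h1 : sig α 1 (t+ε+p) = bb α 1 (2*(t+ε+p)) 0 := (bb_sig α 1 (t+ε+p)).symm
    have h2 := bb_split α 1 (2*t+ε) (2*(t+ε+p)) (by omega)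
    rw [show 2*(t+ε+p) - (2*t+ε) = 2*p+ε by omega] at h2
    have h3 : ∑ h ∈ Finset.range (2*(t+ε+p)+1),
          bb α 1 (2*t+ε) h * bb α 1 (2*p+ε) h * pp α 1 h
        = ∑ h ∈ Finset.range R,
          bb α 1 (2*t+ε) h * bb α 1 (2*p+ε) h * pp α 1 h := by
      apply Finset.sum_subset
      · apply Finset.range_subset_range.mpr
        omega
      · intro h hh hh2
        rw [Finset.mem_range] at hh
        rw [Finset.mem_range] at hh2
        rw [bb_zero_of_lt α (show 2*p+ε < h by omega) 1]
        ring
    rw [h1, h2, h3, Finset.mul_sum]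
  rw [Finset.sum_congr rfl hsig, Finset.sum_comm]
  have hfac : ∀ h ∈ Finset.range R,
      ∑ p ∈ Finset.range (s+1),
          uvec α s ε p * (bb α 1 (2*t+ε) h * bb α 1 (2*p+ε) h * pp α 1 h)
        = (bb α 1 (2*t+ε) h * pp α 1 h)
            * ∑ p ∈ Finset.range (s+1), uvec α s ε p * bb α 1 (2*p+ε) h := by
    intro h _
    rw [Finset.mul_sum]
    apply Finset.sum_congr rfl
    intro p _
    ring
  rw [Finset.sum_congr rfl hfac]
  rw [Finset.sum_eq_single_of_mem (2*s+ε) (by rw [Finset.mem_range]; omega)]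
  · rw [show (2*s+ε) = 2*s+ε by rfl]
    have := uvec_ortho α s ε s le_rfl
    rw [if_pos rfl] at this
    rw [this, mul_one]
  · intro h _ hne
    by_cases hpar : h % 2 = ε
    · by_cases hle : h / 2 ≤ s
      · have hh : h = 2*(h/2) + ε := by omega
        have := uvec_ortho α s ε (h/2) hle
        rw [if_neg (by omega)] at this
        rw [hh, this, mul_zero]
      · have hz : ∑ p ∈ Finset.range (s+1), uvec α s ε p * bb α 1 (2*p+ε) h = 0 := by
          apply Finset.sum_eq_zero
          intro p hp
          rw [Finset.mem_range] at hp
          rw [bb_zero_of_lt α (show 2*p+ε < h by omega) 1, mul_zero]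
        rw [hz, mul_zero]
    · have hz : ∑ p ∈ Finset.range (s+1), uvec α s ε p * bb α 1 (2*p+ε) h = 0 := by
        apply Finset.sum_eq_zero
        intro p _
        rw [bb_zero_parity α 1 (2*p+ε) h (by omega), mul_zero]
      rw [hz, mul_zero]

section Measure

variable {μ : Measure ℝ} (hint : ∀ n : ℕ, Integrable (fun x => x ^ n) μ)
variable {a : ℕ → ℝ} (ha : ∀ n : ℕ, a n = ∫ x, x ^ n ∂μ)

lemma poly_expand (u : ℕ → ℝ) (s k : ℕ) :
    (fun x : ℝ => x^k * ∑ p ∈ Finset.range (s+1), u p * x^p)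
      = fun x : ℝ => ∑ p ∈ Finset.range (s+1), u p * x^(k+p) := by
  funext x
  rw [Finset.mul_sum]
  apply Finset.sum_congr rfl
  intro p _
  rw [pow_add]
  ring

include hint in
lemma intPoly (u : ℕ → ℝ) (s k : ℕ) :
    Integrable (fun x : ℝ => x^k * ∑ p ∈ Finset.range (s+1), u p * x^p) μ := by
  rw [poly_expand]
  apply integrable_finset_sum
  intro p _
  exact (hint (k+p)).const_mul (u p)

include hint ha in
lemma intPoly_eq (u : ℕ → ℝ) (s k : ℕ) :
    ∫ x, x^k * ∑ p ∈ Finset.range (s+1), u p * x^p ∂μ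
      = ∑ p ∈ Finset.range (s+1), u p * a (k+p) := by
  rw [poly_expand, integral_finset_sum]
  · apply Finset.sum_congr rfl
    intro p _
    rw [MeasureTheory.integral_const_mul, ha (k+p)]
  · intro p _
    exact (hint (k+p)).const_mul (u p)

lemma sq_expand (u : ℕ → ℝ) (s ε : ℕ) :
    (fun x : ℝ => x^ε * (∑ p ∈ Finset.range (s+1), u p * x^p)^2)
      = fun x : ℝ => ∑ p ∈ Finset.range (s+1),
          u p * (x^(ε+p) * ∑ q ∈ Finset.range (s+1), u q * x^q) := by
  funext x
  rw [sq, Finset.sum_mul]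
  rw [Finset.mul_sum]
  apply Finset.sum_congr rfl
  intro p _
  rw [pow_add]
  ring

include hint in
lemma intSq (u : ℕ → ℝ) (s ε : ℕ) :
    Integrable (fun x : ℝ => x^ε * (∑ p ∈ Finset.range (s+1), u p * x^p)^2) μ := by
  rw [sq_expand]
  apply integrable_finset_sum
  intro p _
  exact (intPoly hint u s (ε+p)).const_mul (u p)

include hint ha in
lemma intSq_eq (u : ℕ → ℝ) (s ε : ℕ) :
    ∫ x, x^ε * (∑ p ∈ Finset.range (s+1), u p * x^p)^2 ∂μ
      = ∑ p ∈ Finset.range (s+1), u p * ∑ q ∈ Finset.range (s+1), u q * a (ε+p+q) := by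
  rw [sq_expand, integral_finset_sum]
  · apply Finset.sum_congr rfl
    intro p _
    rw [MeasureTheory.integral_const_mul, intPoly_eq hint ha u s (ε+p)]
  · intro p _
    exact (intPoly hint u s (ε+p)).const_mul (u p)

end Measure

section Measure2

variable {μ : Measure ℝ} (hint : ∀ n : ℕ, Integrable (fun x => x ^ n) μ)
variable {a : ℕ → ℝ} (ha : ∀ n : ℕ, a n = ∫ x, x ^ n ∂μ)

include hint ha in
lemma wrep (α : ℕ → ℝ) (s ε : ℕ) (hε : ε ≤ 1)
    (hmatch : ∀ j, j ≤ 2*s+ε → a j = a 0 * sig α 1 j) :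
    ∫ x, x^ε * (∑ p ∈ Finset.range (s+1), uvec α s ε p * x^p)^2 ∂μ
      = a 0 * pp α 1 (2*s+ε) := by
  rw [intSq_eq hint ha]
  have h1 : ∀ p ∈ Finset.range (s+1),
      uvec α s ε p * ∑ q ∈ Finset.range (s+1), uvec α s ε q * a (ε+p+q)
        = (a 0 * pp α 1 (2*s+ε)) * (uvec α s ε p * bb α 1 (2*p+ε) (2*s+ε)) := by
    intro p hp
    rw [Finset.mem_range] at hp
    have h2 : ∀ q ∈ Finset.range (s+1),
        uvec α s ε q * a (ε+p+q) = a 0 * (uvec α s ε q * sig α 1 (p+ε+q)) := by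
      intro q hq
      rw [Finset.mem_range] at hq
      rw [hmatch (ε+p+q) (by omega), show ε+p+q = p+ε+q by omega]
      ring
    rw [Finset.sum_congr rfl h2, ← Finset.mul_sum, key_sum α s ε hε p]
    ring
  rw [Finset.sum_congr rfl h1, ← Finset.mul_sum]
  have h3 := uvec_ortho α s ε s le_rfl
  rw [if_pos rfl] at h3
  rw [h3, mul_one]

include hint ha in
lemma deg_rec (h0 : μ (Set.Iio 0) = 0) (α : ℕ → ℝ) (s ε : ℕ) (hε : ε ≤ 1)
    (hmatch : ∀ j, j ≤ 2*s+ε → a j = a 0 * sig α 1 j)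
    (hz : a 0 * pp α 1 (2*s+ε) = 0) (t : ℕ) :
    ∑ p ∈ Finset.range (s+1), uvec α s ε p * a (t+ε+p) = 0 := by
  set S : ℝ → ℝ := fun x => ∑ p ∈ Finset.range (s+1), uvec α s ε p * x^p with hS
  have hx : ∀ᵐ x ∂μ, 0 ≤ x := by
    have hset : {x : ℝ | ¬ 0 ≤ x} = Set.Iio 0 := by
      ext x
      simp [not_le]
    rw [ae_iff, hset]
    exact h0
  have hint0 : ∫ x, x^ε * (S x)^2 ∂μ = 0 := by
    rw [hS]
    rw [wrep hint ha α s ε hε hmatch]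
    exact hz
  have hnn : 0 ≤ᵐ[μ] fun x => x^ε * (S x)^2 := by
    filter_upwards [hx] with x hx0
    exact mul_nonneg (pow_nonneg hx0 ε) (sq_nonneg _)
  have hI : Integrable (fun x => x^ε * (S x)^2) μ := intSq hint _ s ε
  have hae : (fun x => x^ε * (S x)^2) =ᵐ[μ] 0 :=
    (MeasureTheory.integral_eq_zero_iff_of_nonneg_ae hnn hI).mp hint0
  have hae2 : (fun x => x^(t+ε) * S x) =ᵐ[μ] 0 := by
    filter_upwards [hae] with x hxz
    have hxz' : x^ε * (S x)^2 = 0 := hxz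
    rcases mul_eq_zero.mp hxz' with h | h
    · have hx0 : x = 0 ∧ ε ≠ 0 := by
        constructor
        · exact (pow_eq_zero_iff'.mp h).1
        · intro hε0
          rw [hε0, pow_zero] at h
          norm_num at h
      show x^(t+ε) * S x = 0
      rw [hx0.1, zero_pow (by omega), zero_mul]
    · have hS0 : S x = 0 := pow_eq_zero_iff (by norm_num) |>.mp h
      show x^(t+ε) * S x = 0
      rw [hS0, mul_zero]
  have hzero : ∫ x, x^(t+ε) * S x ∂μ = 0 := by
    rw [MeasureTheory.integral_congr_ae hae2]
    simp
  rw [hS] at hzero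
  rw [intPoly_eq hint ha _ s (t+ε)] at hzero
  exact hzero

end Measure2

noncomputable def greedy (a : ℕ → ℝ) : ℕ → ℝ
  | 0 => 0
  | n+1 =>
    let β : ℕ → ℝ := fun j => if _ : j < n+1 then greedy a j else 0
    let p : ℝ := a 0 * ∏ j ∈ Finset.range n, β (j+1)
    if p = 0 then 0 else (a (n+1) - a 0 * sig β 1 (n+1)) / p

lemma greedy_succ (a : ℕ → ℝ) (n : ℕ) :
    greedy a (n+1) =
      (let β : ℕ → ℝ := fun j => if _ : j < n+1 then greedy a j else 0
       let p : ℝ := a 0 * ∏ j ∈ Finset.range n, β (j+1)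
       if p = 0 then 0 else (a (n+1) - a 0 * sig β 1 (n+1)) / p) := by
  rw [greedy]

theorem stmt0 (a : ℕ → ℝ)
    (hmom : ∃ μ : Measure ℝ, μ (Set.Iio 0) = 0 ∧
      (∀ n : ℕ, Integrable (fun x => x ^ n) μ) ∧
      (∀ n : ℕ, a n = ∫ x, x ^ n ∂μ)) :
    ∃ c : ℝ, 0 ≤ c ∧ ∃ α : ℕ → ℝ, (∀ i, 0 ≤ α i) ∧
      ∀ N : ℕ, ∀ n < N,
        PowerSeries.coeff n (PowerSeries.C c * sfrac α N 1) = a n := by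

  obtain ⟨μ, h0, hint, ha⟩ := hmom
  set α : ℕ → ℝ := greedy a with hα
  have hc0 : 0 ≤ a 0 := by
    rw [ha 0]
    apply integral_nonneg
    intro x
    simp
  have hxae : ∀ᵐ x ∂μ, 0 ≤ x := by
    have hset : {x : ℝ | ¬ 0 ≤ x} = Set.Iio 0 := by
      ext x
      simp [not_le]
    rw [ae_iff, hset]
    exact h0
  have hx_main : ∀ n, a n = a 0 * sig α 1 n ∧ 0 ≤ α n := by
    intro n
    induction n using Nat.strong_induction_on with
    | _ n IH =>
      match n with
      | 0 =>
        have hg0 : α 0 = 0 := by rw [hα, greedy]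
        refine ⟨by rw [sig_zero]; ring, by rw [hg0]⟩
      | n+1 =>
        set β : ℕ → ℝ := fun j => if _ : j < n+1 then greedy a j else 0 with hβ
        have hβeq : ∀ j, j < n+1 → β j = α j := by
          intro j hj
          rw [hβ, hα]
          simp only [dif_pos hj]
        have hβtop : β (n+1) = 0 := by
          rw [hβ]
          simp only [dif_neg (lt_irrefl (n+1))]
        set p : ℝ := a 0 * ∏ j ∈ Finset.range n, β (j+1) with hp
        have hpp : p = a 0 * pp α 1 n := by
          rw [hp, pp]
          congr 1
          apply Finset.prod_congr rfl
          intro j hj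
          rw [Finset.mem_range] at hj
          rw [hβeq (j+1) (by omega)]
          congr 1
          omega
        have hgs : α (n+1) = if p = 0 then 0 else (a (n+1) - a 0 * sig β 1 (n+1)) / p := by
          conv_lhs => rw [hα, greedy_succ]
        have haff : sig α 1 (n+1) = sig β 1 (n+1) + α (n+1) * pp α 1 n := by
          have h1 := sig_affine α β n 1 (fun j h1 h2 => (hβeq j (by omega)).symm)
          rw [show (1+n) = n+1 by omega] at h1
          rw [hβtop, sub_zero] at h1
          rw [h1, pp]
        by_cases hp0 : p = 0
        · rw [if_pos hp0] at hgs
          refine ⟨?_, by rw [hgs]⟩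
          by_cases ha0 : a 0 = 0
          · have h1 : a 0 = (μ Set.univ).toReal := by
              rw [ha 0]
              simp [Measure.real]
            have hfin : μ Set.univ < ⊤ := by
              have h2 := hint 0
              simp only [pow_zero] at h2
              rcases (MeasureTheory.integrable_const_iff (c := (1:ℝ))).mp h2 with h3 | h3
              · norm_num at h3
              · exact h3.measure_univ_lt_top
            have hμz : μ Set.univ = 0 := by
              rw [ha0] at h1
              exact ((ENNReal.toReal_eq_zero_iff _).mp h1.symm).resolve_right (by
                intro hc
                rw [hc] at hfin
                exact lt_irrefl _ hfin)
            have hμ0 : μ = 0 := Measure.measure_univ_eq_zero.mp hμz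
            rw [ha (n+1), hμ0, ha0]
            simp
          · have hppz : pp α 1 n = 0 := by
              rw [hpp] at hp0
              rcases mul_eq_zero.mp hp0 with h | h
              · exact absurd h ha0
              · exact h
            obtain ⟨j, hjmem, hjz⟩ := Finset.prod_eq_zero_iff.mp hppz
            rw [Finset.mem_range] at hjmem
            set m := j + 1 with hm
            have hppm : pp α 1 m = 0 := by
              rw [pp]
              apply Finset.prod_eq_zero (Finset.mem_range.mpr (show j < m by omega))
              exact hjz
            set s := m / 2 with hs
            set ε := m % 2 with hε'
            have hmse : m = 2*s+ε := by omega
            have hε : ε ≤ 1 := by omega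
            have hmatch : ∀ j', j' ≤ 2*s+ε → a j' = a 0 * sig α 1 j' := by
              intro j' hj'
              exact (IH j' (by omega)).1
            have hzz : a 0 * pp α 1 (2*s+ε) = 0 := by
              rw [← hmse, hppm, mul_zero]
            set t := n + 1 - ε - s with ht
            have htop : t + ε + s = n + 1 := by omega
            have hrec := deg_rec hint ha h0 α s ε hε hmatch hzz t
            rw [Finset.sum_range_succ, uvec_top, one_mul, htop] at hrec
            have halg := key_sum α s ε hε t
            have halg0 : ∑ q ∈ Finset.range (s+1),
                uvec α s ε q * (a 0 * sig α 1 (t+ε+q)) = 0 := by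
              have h4 : ∑ q ∈ Finset.range (s+1), uvec α s ε q * (a 0 * sig α 1 (t+ε+q))
                  = a 0 * ∑ q ∈ Finset.range (s+1), uvec α s ε q * sig α 1 (t+ε+q) := by
                rw [Finset.mul_sum]
                apply Finset.sum_congr rfl
                intro q _
                ring
              rw [h4, halg]
              have h5 : a 0 * (bb α 1 (2*t+ε) (2*s+ε) * pp α 1 (2*s+ε))
                  = bb α 1 (2*t+ε) (2*s+ε) * (a 0 * pp α 1 (2*s+ε)) := by ring
              rw [h5, hzz, mul_zero]
            rw [Finset.sum_range_succ, uvec_top, one_mul, htop] at halg0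
            have hsum_eq : ∑ q ∈ Finset.range s, uvec α s ε q * (a 0 * sig α 1 (t+ε+q))
                = ∑ q ∈ Finset.range s, uvec α s ε q * a (t+ε+q) := by
              apply Finset.sum_congr rfl
              intro q hq
              rw [Finset.mem_range] at hq
              rw [← (IH (t+ε+q) (by omega)).1]
            rw [hsum_eq] at halg0
            linarith
        · rw [if_neg hp0] at hgs
          have hmatch_new : a (n+1) = a 0 * sig α 1 (n+1) := by
            rw [haff, mul_add]
            rw [hgs, hpp]
            have hppn : a 0 * pp α 1 n ≠ 0 := by rw [← hpp]; exact hp0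
            have ha0' : a 0 ≠ 0 := left_ne_zero_of_mul hppn
            have hpn' : pp α 1 n ≠ 0 := right_ne_zero_of_mul hppn
            field_simp
            ring
          refine ⟨hmatch_new, ?_⟩
          have hmatch' : ∀ j', j' ≤ n+1 → a j' = a 0 * sig α 1 j' := by
            intro j' hj'
            by_cases hj : j' = n+1
            · rw [hj]; exact hmatch_new
            · exact (IH j' (by omega)).1
          set s := (n+1) / 2 with hs
          set ε := (n+1) % 2 with hε'
          have hnse : 2*s+ε = n+1 := by omega
          have hε : ε ≤ 1 := by omega
          have hw := wrep hint ha α s ε hε (fun j hj => hmatch' j (by omega))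
          have hwnn : 0 ≤ ∫ x, x^ε * (∑ q ∈ Finset.range (s+1), uvec α s ε q * x^q)^2 ∂μ := by
            apply integral_nonneg_of_ae
            filter_upwards [hxae] with x hx0
            exact mul_nonneg (pow_nonneg hx0 ε) (sq_nonneg _)
          rw [hw, hnse] at hwnn
          have hps : pp α 1 (n+1) = pp α 1 n * α (n+1) := by
            have := pp_succ α 1 n
            rw [show (1+n) = n+1 by omega] at this
            exact this
          rw [hps] at hwnn
          have hppos : 0 < p := by
            rcases lt_or_eq_of_le (show 0 ≤ p by
              rw [hpp]
              apply mul_nonneg hc0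
              rw [pp]
              apply Finset.prod_nonneg
              intro j hj
              rw [Finset.mem_range] at hj
              exact (IH (1+j) (by omega)).2) with h | h
            · exact h
            · exact absurd h.symm hp0
          rw [hpp] at hppos
          nlinarith
  refine ⟨a 0, hc0, α, fun i => (hx_main i).2, ?_⟩
  intro N n hn
  rw [PowerSeries.coeff_C_mul, coeff_sfrac α hn 1]
  exact ((hx_main n).1).symm
end

section
/- Monotonicity in the reparametrization: fix ξ ≥ 0 and nonnegative reals (g_i)_{i≥0} and (g'_i)_{i≥0} satisfying, for all k ≥ 1, ξ g_{2k-2} + g_{2k-1} = ξ g'_{2k-2} + g'_{2k-1} and g_{2k-1} g_{2k}/(1+g_{2k-2}) = g'_{2k-1} g'_{2k}/(1+g'_{2k-2}). If 0 ≤ g'_0 ≤ g_0 and in addition whenever g'_{2k+1} = 0 one has g'_{2k+2} = 0, then for all k ≥ 0: 0 ≤ g'_{2k} ≤ g_{2k} and g'_{2k+1} ≥ g_{2k+1} ≥ 0. -/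
theorem stmt8 (ξ : ℝ) (hξ : 0 ≤ ξ) (g g' : ℕ → ℝ)
    (hg : ∀ i, 0 ≤ g i) (hg' : ∀ i, 0 ≤ g' i)
    (hodd : ∀ k : ℕ, 1 ≤ k →
      ξ * g (2 * k - 2) + g (2 * k - 1) = ξ * g' (2 * k - 2) + g' (2 * k - 1))
    (heven : ∀ k : ℕ, 1 ≤ k →
      g (2 * k - 1) * g (2 * k) / (1 + g (2 * k - 2))
        = g' (2 * k - 1) * g' (2 * k) / (1 + g' (2 * k - 2)))
    (h0 : g' 0 ≤ g 0)
    (hvanish : ∀ k : ℕ, g' (2 * k + 1) = 0 → g' (2 * k + 2) = 0) :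
    ∀ k : ℕ, (g' (2 * k) ≤ g (2 * k)) ∧ (g (2 * k + 1) ≤ g' (2 * k + 1)) := by
  -- from the even inequality at k, get the odd inequality at k
  have oddstep : ∀ k : ℕ, g' (2 * k) ≤ g (2 * k) → g (2 * k + 1) ≤ g' (2 * k + 1) := by
    intro k hk
    have h := hodd (k + 1) (by omega)
    have e1 : 2 * (k + 1) - 2 = 2 * k := by omega
    have e2 : 2 * (k + 1) - 1 = 2 * k + 1 := by omega
    rw [e1, e2] at h
    nlinarith [mul_le_mul_of_nonneg_left hk hξ]
  intro k
  induction k with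
  | zero => exact ⟨h0, oddstep 0 h0⟩
  | succ n ih =>
    obtain ⟨ihe, iho⟩ := ih
    have he : g' (2 * (n + 1)) ≤ g (2 * (n + 1)) := by
      rcases eq_or_lt_of_le (hg' (2 * n + 1)) with hz | hpos
      · have := hvanish n hz.symm
        have : g' (2 * (n + 1)) = 0 := by
          have e : 2 * (n + 1) = 2 * n + 2 := by omega
          rw [e]; exact this
        rw [this]; exact hg _
      · have h := heven (n + 1) (by omega)
        have e1 : 2 * (n + 1) - 2 = 2 * n := by omega
        have e2 : 2 * (n + 1) - 1 = 2 * n + 1 := by omega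
        rw [e1, e2] at h
        have hd1 : (0:ℝ) < 1 + g (2 * n) := by linarith [hg (2 * n)]
        have hd2 : (0:ℝ) < 1 + g' (2 * n) := by linarith [hg' (2 * n)]
        have key : g (2 * n + 1) * g (2 * (n + 1)) * (1 + g' (2 * n))
            = g' (2 * n + 1) * g' (2 * (n + 1)) * (1 + g (2 * n)) := by
          field_simp at h
          linarith [h]
        nlinarith [mul_nonneg (sub_nonneg.2 iho) (hg (2 * (n + 1))),
          mul_nonneg (mul_nonneg (sub_nonneg.2 ihe) (hg (2 * n + 1))) (hg (2 * (n + 1))),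
          mul_pos hpos hd1, hg (2 * (n + 1)), hg' (2 * (n + 1))]
    exact ⟨he, oddstep (n + 1) he⟩
end

section
/- Main theorem, (c) ⟹ (b): Fix ξ ≥ 0. If there exist c ≥ 0 and g_0, g_1, g_2, ... ≥ 0 (with g_0 possibly positive) generating S-fraction coefficients α_{2k-1} = ξ(1+g_{2k-2}) + g_{2k-1}, α_{2k} = g_{2k-1} g_{2k}/(1+g_{2k-2}), then there exist g'_0 = 0 and g'_1, g'_2, ... ≥ 0 generating the same coefficients (α_i) via the same formulas. -/
/-- Even-indexed entries of the modified g-sequence: `auxE ξ g k = g'_{2k}`. -/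
noncomputable def auxE (ξ : ℝ) (g : ℕ → ℝ) : ℕ → ℝ
  | 0 => 0
  | k + 1 =>
      g (2*k+1) * g (2*k+2) * (1 + auxE ξ g k) /
        ((1 + g (2*k)) * (g (2*k+1) + ξ * (g (2*k) - auxE ξ g k)))

lemma auxE_bounds (ξ : ℝ) (hξ : 0 ≤ ξ) (g : ℕ → ℝ) (hg : ∀ i, 0 ≤ g i) :
    ∀ k, 0 ≤ auxE ξ g k ∧ auxE ξ g k ≤ g (2*k) := by
  intro k
  induction k with
  | zero => exact ⟨le_refl _, hg 0⟩
  | succ k ih =>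
    obtain ⟨h0, h1⟩ := ih
    set e := auxE ξ g k with he
    have ho : 0 ≤ g (2*k+1) + ξ * (g (2*k) - e) := by
      have := mul_nonneg hξ (by linarith : (0:ℝ) ≤ g (2*k) - e)
      have := hg (2*k+1); linarith
    have hnum : 0 ≤ g (2*k+1) * g (2*k+2) * (1 + e) :=
      mul_nonneg (mul_nonneg (hg _) (hg _)) (by linarith)
    constructor
    · exact div_nonneg hnum (mul_nonneg (by have := hg (2*k); linarith) ho)
    · show g (2*k+1) * g (2*k+2) * (1 + e) /
        ((1 + g (2*k)) * (g (2*k+1) + ξ * (g (2*k) - e))) ≤ g (2*(k+1))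
      rcases eq_or_lt_of_le ho with hz | hpos
      · rw [← hz]
        simp [hg _]
      · have hd : 0 < (1 + g (2*k)) * (g (2*k+1) + ξ * (g (2*k) - e)) := by
          have := hg (2*k); positivity
        rw [div_le_iff₀ hd]
        have h2 : (2:ℕ)*(k+1) = 2*k+2 := by ring
        rw [h2]
        have hle1 : g (2*k+1) ≤ g (2*k+1) + ξ * (g (2*k) - e) := by
          have := mul_nonneg hξ (by linarith : (0:ℝ) ≤ g (2*k) - e); linarith
        have hle2 : 1 + e ≤ 1 + g (2*k) := by linarith
        calc g (2*k+1) * g (2*k+2) * (1 + e)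
            ≤ (g (2*k+1) + ξ * (g (2*k) - e)) * g (2*k+2) * (1 + g (2*k)) := by
              exact mul_le_mul (mul_le_mul_of_nonneg_right hle1 (hg _)) hle2
                (by linarith) (mul_nonneg hpos.le (hg _))
          _ = g (2*k+2) * ((1 + g (2*k)) * (g (2*k+1) + ξ * (g (2*k) - e))) := by ring

theorem stmt9 (ξ : ℝ) (hξ : 0 ≤ ξ) (g α : ℕ → ℝ)
    (hg : ∀ i, 0 ≤ g i)
    (hα : ∀ k : ℕ, 1 ≤ k →
      α (2 * k - 1) = ξ * (1 + g (2 * k - 2)) + g (2 * k - 1) ∧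
      α (2 * k) = g (2 * k - 1) * g (2 * k) / (1 + g (2 * k - 2))) :
    ∃ g' : ℕ → ℝ, g' 0 = 0 ∧ (∀ i, 0 ≤ g' i) ∧
      ∀ k : ℕ, 1 ≤ k →
        α (2 * k - 1) = ξ * (1 + g' (2 * k - 2)) + g' (2 * k - 1) ∧
        α (2 * k) = g' (2 * k - 1) * g' (2 * k) / (1 + g' (2 * k - 2)) := by
  set e := auxE ξ g with he
  have hb := auxE_bounds ξ hξ g hg
  refine ⟨fun n => if n % 2 = 0 then e (n / 2) else g n + ξ * (g (n-1) - e ((n-1)/2)),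
    by simp [he, auxE], ?_, ?_⟩
  · intro i
    by_cases h : i % 2 = 0
    · simp only [h, if_pos]
      exact (hb _).1
    · simp only [if_neg h]
      obtain ⟨h0, h1⟩ := hb ((i-1)/2)
      have hgeq : 2 * ((i-1)/2) = i - 1 := by omega
      have h1' := h1
      rw [hgeq] at h1'
      have : 0 ≤ ξ * (g (i-1) - e ((i-1)/2)) := mul_nonneg hξ (by linarith)
      have := hg i; linarith
  · intro k hk
    obtain ⟨j, rfl⟩ : ∃ j, k = j + 1 := ⟨k - 1, by omega⟩
    have i1 : 2 * (j+1) - 1 = 2*j+1 := by omega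
    have i2 : 2 * (j+1) - 2 = 2*j := by omega
    have i3 : 2 * (j+1) = 2*j+2 := by omega
    obtain ⟨hα1, hα2⟩ := hα (j+1) (by omega)
    rw [i1, i2, i3] at *
    have m1 : (2*j+1) % 2 = 1 := by omega
    have m2 : (2*j) % 2 = 0 := by omega
    have m3 : (2*j+2) % 2 = 0 := by omega
    have d1 : (2*j) / 2 = j := by omega
    have d2 : (2*j+1-1)/2 = j := by omega
    have d3 : (2*j+2)/2 = j+1 := by omega
    simp only [m1, m2, m3, d1, d2, d3, if_pos, if_neg, one_ne_zero, reduceIte,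
      Nat.add_sub_cancel]
    constructor
    · rw [hα1]; ring
    · rw [hα2]
      obtain ⟨h0, h1⟩ := hb j
      have hden : (0:ℝ) < 1 + g (2*j) := by have := hg (2*j); linarith
      have hden' : (0:ℝ) < 1 + e j := by linarith
      set o := g (2*j+1) + ξ * (g (2*j) - e j) with hoo
      have ho : 0 ≤ o := by
        have := mul_nonneg hξ (by linarith : (0:ℝ) ≤ g (2*j) - e j)
        have := hg (2*j+1); linarith
      have heq : e (j+1) = g (2*j+1) * g (2*j+2) * (1 + e j) / ((1 + g (2*j)) * o) := by
        rw [he]; rfl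
      rcases eq_or_lt_of_le ho with hz | hpos
      · -- o = 0 forces g (2*j+1) = 0
        have hg1 : g (2*j+1) = 0 := by
          have h01 := mul_nonneg hξ (by linarith : (0:ℝ) ≤ g (2*j) - e j)
          have := hg (2*j+1)
          nlinarith [hz]
        rw [hg1, heq, ← hz]
        simp
      · rw [heq]
        field_simp
end

section
/- For every ξ > 0 there do not exist nonnegative reals g_0, g_1, g_2, ... satisfying, for all k ≥ 1, both 1 = ξ(1 + g_{2k-2}) + g_{2k-1} and 1 = g_{2k-1} g_{2k}/(1 + g_{2k-2}). -/
theorem stmt12 (ξ : ℝ) (hξ : 0 < ξ) :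
    ¬ ∃ g : ℕ → ℝ, (∀ i, 0 ≤ g i) ∧
      ∀ k : ℕ, 1 ≤ k →
        (1 : ℝ) = ξ * (1 + g (2 * k - 2)) + g (2 * k - 1) ∧
        (1 : ℝ) = g (2 * k - 1) * g (2 * k) / (1 + g (2 * k - 2)) := by
  rintro ⟨g, hg, hk⟩
  have key : ∀ k : ℕ, (k : ℝ) ≤ g (2 * k) := by
    intro k
    induction k with
    | zero => simpa using hg 0
    | succ n ih =>
      obtain ⟨h1, h2⟩ := hk (n + 1) (Nat.le_add_left 1 n)
      have e2 : 2 * (n + 1) - 2 = 2 * n := by omega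
      have e1 : 2 * (n + 1) - 1 = 2 * n + 1 := by omega
      rw [e2, e1] at h1 h2
      have hpos : (0:ℝ) < 1 + g (2 * n) := by linarith [hg (2*n)]
      have hprod : g (2 * n + 1) * g (2 * (n + 1)) = 1 + g (2 * n) := by
        field_simp at h2
        linarith
      have hle1 : g (2 * n + 1) ≤ 1 := by nlinarith [mul_pos hξ hpos]
      have hstep : (1 - g (2 * n + 1)) * g (2 * (n + 1)) ≥ 0 :=
        mul_nonneg (by linarith) (hg _)
      push_cast
      nlinarith [hg (2 * (n + 1))]
  obtain ⟨k, hk'⟩ := exists_nat_gt (1 / ξ)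
  obtain ⟨h1, -⟩ := hk (k + 1) (Nat.le_add_left 1 k)
  have e2 : 2 * (k + 1) - 2 = 2 * k := by omega
  have e1 : 2 * (k + 1) - 1 = 2 * k + 1 := by omega
  rw [e2, e1] at h1
  have hb : (k : ℝ) ≤ g (2 * k) := key k
  have hd : 1 / ξ < (k : ℝ) := hk'
  have : ξ * (1 / ξ) = 1 := by field_simp
  nlinarith [hg (2 * k + 1), mul_lt_mul_of_pos_left hd hξ]
end
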